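/- For every k ≥ 2, the largest adjacency eigenvalue of the binomial tree satisfies the recurrence λ₁(T_k) = (1/2)(λ₁(T_{k−1}) + √(λ₁(T_{k−1})² + 4)), with λ₁(T_1) = 0. -/

import Mathlib

open scoped Matrix in
/-- `lambda1 G` : the largest eigenvalue of the adjacency matrix of `G`. -/
noncomputable def lambda1 {V : Type} [Fintype V] (G : SimpleGraph V) : ℝ :=
  letI := Classical.decRel G.Adj
  sSup {x : ℝ | ∃ v : V → ℝ, v ≠ 0 ∧ G.adjMatrix ℝ *ᵥ v = x • v}

/-- The binomial tree `T_k` on `2^(k-1)` vertices: `T_1 = K_1`, and `T_{k+1}` is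
obtained from `T_k` by attaching one new pendant leaf to every vertex.  Concretely,
vertex `j ≠ 0` is joined to the vertex obtained by clearing the highest set bit
of `j`. -/
def binomialTree (k : ℕ) : SimpleGraph (Fin (2 ^ (k - 1))) :=
  SimpleGraph.fromRel fun i j =>
    (j : ℕ) ≠ 0 ∧ (i : ℕ) + 2 ^ Nat.log 2 (j : ℕ) = (j : ℕ)

open Matrix

noncomputable section AuxBT

/-- The eigenvalue set of the adjacency matrix of `binomialTree k`. -/
def Sset (k : ℕ) : Set ℝ :=
  letI := Classical.decRel (binomialTree k).Adj
  {x : ℝ | ∃ v : Fin (2 ^ (k - 1)) → ℝ, v ≠ 0 ∧ (binomialTree k).adjMatrix ℝ *ᵥ v = x • v}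

lemma lambda1_eq_sSup (k : ℕ) : lambda1 (binomialTree k) = sSup (Sset k) := rfl

lemma binomialTree_adj (m : ℕ) (u v : Fin (2 ^ (m - 1))) :
    (binomialTree m).Adj u v ↔
      (((v : ℕ) ≠ 0 ∧ (u : ℕ) + 2 ^ Nat.log 2 (v : ℕ) = (v : ℕ)) ∨
       ((u : ℕ) ≠ 0 ∧ (v : ℕ) + 2 ^ Nat.log 2 (u : ℕ) = (u : ℕ))) := by
  constructor
  · rintro ⟨hne, h⟩; exact h
  · intro h
    refine ⟨?_, h⟩
    have hpow1 : ∀ n : ℕ, 1 ≤ 2 ^ n := fun n => Nat.one_le_two_pow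
    rintro rfl
    rcases h with ⟨h0, h⟩ | ⟨h0, h⟩ <;> have := hpow1 (Nat.log 2 (u : ℕ)) <;> omega

/-- The reindexing equivalence. -/
def eqv (m : ℕ) : Fin (2 ^ m) ⊕ Fin (2 ^ m) ≃ Fin (2 ^ (m + 1)) :=
  finSumFinEquiv.trans (finCongr (by ring))

lemma eqv_inl (m : ℕ) (i : Fin (2 ^ m)) : ((eqv m (Sum.inl i) : Fin (2 ^ (m+1))) : ℕ) = (i : ℕ) := by
  simp [eqv]

lemma eqv_inr (m : ℕ) (i : Fin (2 ^ m)) :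
    ((eqv m (Sum.inr i) : Fin (2 ^ (m+1))) : ℕ) = 2 ^ m + (i : ℕ) := by
  simp [eqv]; omega

lemma log_high (m : ℕ) (j : Fin (2 ^ m)) : Nat.log 2 (2 ^ m + (j : ℕ)) = m := by
  refine Nat.log_eq_of_pow_le_of_lt_pow (by omega) ?_
  have := j.isLt
  have : (2:ℕ) ^ (m + 1) = 2 ^ m + 2 ^ m := by ring
  omega

lemma adjMatrix_succ (m : ℕ)
    [DecidableRel (binomialTree (m + 1)).Adj] [DecidableRel (binomialTree (m + 2)).Adj]
    (B : Matrix (Fin (2 ^ m)) (Fin (2 ^ m)) ℝ)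
    (hB : ∀ i j, B i j = (binomialTree (m + 1)).adjMatrix ℝ i j) :
    ((binomialTree (m + 2)).adjMatrix ℝ).submatrix (eqv m) (eqv m)
      = Matrix.fromBlocks B 1 1 0 := by
  ext a b
  rcases a with i | i <;> rcases b with j | j <;>
    simp only [submatrix_apply, SimpleGraph.adjMatrix_apply, fromBlocks_apply₁₁,
      fromBlocks_apply₁₂, fromBlocks_apply₂₁, fromBlocks_apply₂₂, Matrix.one_apply,
      Matrix.zero_apply]
  · -- low-low
    have hij : (binomialTree (m+2)).Adj (eqv m (Sum.inl i)) (eqv m (Sum.inl j)) ↔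
        (binomialTree (m+1)).Adj i j := by
      rw [binomialTree_adj (m+2), binomialTree_adj (m+1), eqv_inl, eqv_inl]
    rw [hB, SimpleGraph.adjMatrix_apply]
    exact if_congr hij rfl rfl
  · -- low-high : entry is 1 iff i = j
    have hij : (binomialTree (m+2)).Adj (eqv m (Sum.inl i)) (eqv m (Sum.inr j)) ↔ i = j := by
      rw [binomialTree_adj (m+2), eqv_inl, eqv_inr, log_high m j]
      have hi := i.isLt
      have hj := j.isLt
      constructor
      · rintro (⟨-, h⟩ | ⟨h0, h⟩)
        · exact Fin.ext (by omega)
        · have := Nat.one_le_two_pow (n := Nat.log 2 (i:ℕ)); omega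
      · rintro rfl; exact Or.inl ⟨by omega, by omega⟩
    exact if_congr hij rfl rfl
  · -- high-low
    have hij : (binomialTree (m+2)).Adj (eqv m (Sum.inr i)) (eqv m (Sum.inl j)) ↔ i = j := by
      rw [binomialTree_adj (m+2), eqv_inr, eqv_inl, log_high m i]
      have hi := i.isLt
      have hj := j.isLt
      constructor
      · rintro (⟨h0, h⟩ | ⟨-, h⟩)
        · have := Nat.one_le_two_pow (n := Nat.log 2 (j:ℕ)); omega
        · exact Fin.ext (by omega)
      · rintro rfl; exact Or.inr ⟨by omega, by omega⟩
    exact if_congr hij rfl rfl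
  · -- high-high
    have hadj : ¬ (binomialTree (m+2)).Adj (eqv m (Sum.inr i)) (eqv m (Sum.inr j)) := by
      rw [binomialTree_adj (m+2), eqv_inr, eqv_inr, log_high m i, log_high m j]
      have hi := i.isLt
      have hj := j.isLt
      omega
    simp [hadj]

/-- Eigenvalues of the block matrix `[[A, 1], [1, 0]]`. -/
lemma block_eigen {n : Type} [Fintype n] [DecidableEq n] (A : Matrix n n ℝ) (x : ℝ) :
    (∃ v : n ⊕ n → ℝ, v ≠ 0 ∧ Matrix.fromBlocks A 1 1 0 *ᵥ v = x • v) ↔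
      (∃ μ : ℝ, (∃ a : n → ℝ, a ≠ 0 ∧ A *ᵥ a = μ • a) ∧ x ^ 2 = μ * x + 1) := by
  constructor
  · rintro ⟨v, hv0, hv⟩
    set a := v ∘ Sum.inl with ha
    set b := v ∘ Sum.inr with hb
    have hv' : Matrix.fromBlocks A (1 : Matrix n n ℝ) 1 0 *ᵥ v
        = Sum.elim (A *ᵥ a + b) a := by
      rw [fromBlocks_mulVec]
      simp [Matrix.one_mulVec, Matrix.zero_mulVec, ← ha, ← hb]
    rw [hv'] at hv
    have e1 : A *ᵥ a + b = x • a := by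
      funext i; have := congrFun hv (Sum.inl i); exact this
    have e2 : a = x • b := by
      funext i; have := congrFun hv (Sum.inr i); exact this
    have hx : x ≠ 0 := by
      rintro rfl
      apply hv0
      have hamp : a = 0 := by rw [e2, zero_smul]
      have hbz : b = 0 := by
        have := e1; rw [hamp, Matrix.mulVec_zero, zero_add, zero_smul] at this; exact this
      funext z; rcases z with i | i
      · exact congrFun hamp i
      · exact congrFun hbz i
    have ha0 : a ≠ 0 := by
      intro haz
      apply hv0
      have hbz : b = 0 := by
        have h := e1; rw [haz, Matrix.mulVec_zero, zero_add, smul_zero] at h; exact h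
      funext z; rcases z with i | i
      · exact congrFun haz i
      · exact congrFun hbz i
    refine ⟨x - 1 / x, ⟨a, ha0, ?_⟩, by field_simp; ring⟩
    have hba : b = x⁻¹ • a := by
      rw [e2, smul_smul, inv_mul_cancel₀ hx, one_smul]
    have := e1
    rw [hba] at this
    funext i
    have hi := congrFun this i
    simp only [Pi.add_apply, Pi.smul_apply, smul_eq_mul] at hi ⊢
    have : (A *ᵥ a) i = x * a i - x⁻¹ * a i := by linarith
    rw [this]; field_simp
  · rintro ⟨μ, ⟨a, ha0, ha⟩, hx⟩
    have hxne : x ≠ 0 := by rintro rfl; simp at hx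
    refine ⟨Sum.elim (x • a) a, ?_, ?_⟩
    · intro h
      apply ha0
      funext i
      exact congrFun h (Sum.inr i)
    · rw [fromBlocks_mulVec]
      simp only [Sum.elim_comp_inl, Sum.elim_comp_inr, Matrix.one_mulVec, Matrix.zero_mulVec,
        add_zero]
      have h1 : A *ᵥ (x • a) + a = x • (x • a) := by
        rw [Matrix.mulVec_smul, ha, smul_smul, smul_smul]
        funext i
        simp only [Pi.add_apply, Pi.smul_apply, smul_eq_mul]
        linear_combination (-(a i)) * hx
      funext z
      rcases z with i | i
      · simpa using congrFun h1 i
      · simp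

lemma eigen_reindex {n m' : Type} [Fintype n] [Fintype m'] (M : Matrix m' m' ℝ) (e : n ≃ m')
    (x : ℝ) :
    (∃ v : m' → ℝ, v ≠ 0 ∧ M *ᵥ v = x • v) ↔
      (∃ w : n → ℝ, w ≠ 0 ∧ (M.submatrix e e) *ᵥ w = x • w) := by
  constructor
  · rintro ⟨v, hv0, hv⟩
    refine ⟨v ∘ e, ?_, ?_⟩
    · intro h
      apply hv0
      funext i
      have := congrFun h (e.symm i)
      simpa using this
    · rw [Matrix.submatrix_mulVec_equiv]
      have hc : (v ∘ e) ∘ ⇑e.symm = v := by funext i; simp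
      rw [hc, hv]
      rfl
  · rintro ⟨w, hw0, hw⟩
    refine ⟨w ∘ e.symm, ?_, ?_⟩
    · intro h
      apply hw0
      funext i
      have := congrFun h (e i)
      simpa using this
    · rw [Matrix.submatrix_mulVec_equiv] at hw
      funext i
      have h := congrFun hw (e.symm i)
      simpa using h

/-- The adjacency matrix of `binomialTree (m+1)`, with its index type normalized. -/
def adjB (m : ℕ) : Matrix (Fin (2 ^ m)) (Fin (2 ^ m)) ℝ :=
  letI := Classical.decRel (binomialTree (m + 1)).Adj
  (binomialTree (m + 1)).adjMatrix ℝ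

lemma mem_Sset_succ_iff (m : ℕ) (x : ℝ) :
    x ∈ Sset (m + 1) ↔ ∃ a : Fin (2 ^ m) → ℝ, a ≠ 0 ∧ adjB m *ᵥ a = x • a := Iff.rfl

lemma Sset_succ (m : ℕ) :
    Sset (m + 2) = {x : ℝ | ∃ μ ∈ Sset (m + 1), x ^ 2 = μ * x + 1} := by
  letI := Classical.decRel (binomialTree (m + 1)).Adj
  letI := Classical.decRel (binomialTree (m + 2)).Adj
  have key : (adjB (m + 1)).submatrix (eqv m) (eqv m) = Matrix.fromBlocks (adjB m) 1 1 0 :=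
    adjMatrix_succ m (adjB m) (fun _ _ => rfl)
  ext x
  rw [Set.mem_setOf_eq]
  rw [mem_Sset_succ_iff (m + 1) x]
  rw [eigen_reindex (adjB (m + 1)) (eqv m) x, key, block_eigen (adjB m) x]
  exact exists_congr fun μ => and_congr_left fun _ => (mem_Sset_succ_iff m μ).symm

lemma abs_le_of_eigen {n : Type} [Fintype n] (M : Matrix n n ℝ) (hM : ∀ i j, |M i j| ≤ 1)
    (x : ℝ) (v : n → ℝ) (hv0 : v ≠ 0) (hv : M *ᵥ v = x • v) :
    |x| ≤ (Fintype.card n : ℝ) := by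
  obtain ⟨j₀, hj₀⟩ := Function.ne_iff.1 hv0
  have hne : (Finset.univ : Finset n).Nonempty := ⟨j₀, Finset.mem_univ j₀⟩
  obtain ⟨i, -, hi⟩ := Finset.exists_max_image Finset.univ (fun j => |v j|) hne
  have hipos : 0 < |v i| := by
    have : (0:ℝ) < |v j₀| := abs_pos.mpr (by simpa using hj₀)
    exact lt_of_lt_of_le this (hi j₀ (Finset.mem_univ j₀))
  have h1 : (M *ᵥ v) i = x * v i := by rw [hv]; rfl
  have h2 : (M *ᵥ v) i = ∑ j, M i j * v j := by
    simp [Matrix.mulVec, dotProduct]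
  have hxi : |x| * |v i| ≤ (Fintype.card n : ℝ) * |v i| := by
    calc |x| * |v i| = |x * v i| := (abs_mul x (v i)).symm
      _ = |∑ j, M i j * v j| := by rw [← h1, h2]
      _ ≤ ∑ j, |M i j * v j| := Finset.abs_sum_le_sum_abs _ _
      _ ≤ ∑ _j : n, |v i| := by
          refine Finset.sum_le_sum fun j _ => ?_
          rw [abs_mul]
          calc |M i j| * |v j| ≤ 1 * |v i| :=
                mul_le_mul (hM i j) (hi j (Finset.mem_univ j)) (abs_nonneg _) zero_le_one
            _ = |v i| := one_mul _
      _ = (Fintype.card n : ℝ) * |v i| := by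
          rw [Finset.sum_const, Finset.card_univ, nsmul_eq_mul]
  exact le_of_mul_le_mul_right hxi hipos

lemma Sset_bdd (k : ℕ) : BddAbove (Sset k) := by
  letI := Classical.decRel (binomialTree k).Adj
  refine ⟨(Fintype.card (Fin (2 ^ (k - 1))) : ℝ), ?_⟩
  rintro x ⟨v, hv0, hv⟩
  have hent : ∀ i j, |(binomialTree k).adjMatrix ℝ i j| ≤ 1 := by
    intro i j
    rw [SimpleGraph.adjMatrix_apply]
    split_ifs <;> norm_num
  exact le_trans (le_abs_self x) (abs_le_of_eigen _ hent x v hv0 hv)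

lemma Sset_one : Sset 1 = {0} := by
  letI := Classical.decRel (binomialTree 1).Adj
  have hA : (binomialTree 1).adjMatrix ℝ = 0 := by
    ext i j
    rw [SimpleGraph.adjMatrix_apply]
    have : i = j := by
      have hi := i.isLt
      have hj := j.isLt
      exact Fin.ext (by omega)
    simp [this]
  ext x
  simp only [Set.mem_singleton_iff]
  constructor
  · rintro ⟨v, hv0, hv⟩
    rw [hA, Matrix.zero_mulVec] at hv
    obtain ⟨j, hj⟩ := Function.ne_iff.1 hv0
    have := congrFun hv j
    simp only [Pi.zero_apply, Pi.smul_apply, smul_eq_mul] at this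
    rcases mul_eq_zero.1 this.symm with h | h
    · exact h
    · exact absurd h hj
  · rintro rfl
    refine ⟨fun _ => 1, ?_, ?_⟩
    · intro h; have := congrFun h ⟨0, by norm_num⟩; simp at this
    · rw [hA, Matrix.zero_mulVec, zero_smul]

noncomputable def fA (μ : ℝ) : ℝ := (μ + Real.sqrt (μ ^ 2 + 4)) / 2

lemma hs_sq (μ : ℝ) : Real.sqrt (μ ^ 2 + 4) ^ 2 = μ ^ 2 + 4 :=
  Real.sq_sqrt (by positivity)

lemma hs_gt (μ : ℝ) : |μ| < Real.sqrt (μ ^ 2 + 4) := by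
  nlinarith [hs_sq μ, Real.sqrt_nonneg (μ ^ 2 + 4), abs_nonneg μ, sq_abs μ]

lemma fA_root (μ : ℝ) : (fA μ) ^ 2 = μ * fA μ + 1 := by
  have h := hs_sq μ
  unfold fA
  linear_combination h / 4

lemma root_iff (μ x : ℝ) :
    x ^ 2 = μ * x + 1 ↔ x = fA μ ∨ x = (μ - Real.sqrt (μ ^ 2 + 4)) / 2 := by
  have h := hs_sq μ
  constructor
  · intro hx
    have key : (2 * x - μ - Real.sqrt (μ ^ 2 + 4)) * (2 * x - μ + Real.sqrt (μ ^ 2 + 4)) = 0 := by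
      linear_combination 4 * hx - h
    rcases mul_eq_zero.1 key with h' | h'
    · left; unfold fA; linarith
    · right; linarith
  · rintro (rfl | rfl)
    · exact fA_root μ
    · linear_combination h / 4

lemma fA_pos (μ : ℝ) : 0 < fA μ := by
  have h := hs_gt μ
  have := neg_abs_le μ
  unfold fA
  linarith

lemma gA_neg (μ : ℝ) : (μ - Real.sqrt (μ ^ 2 + 4)) / 2 < 0 := by
  have h := hs_gt μ
  have := le_abs_self μ
  linarith

lemma fA_mono : Monotone fA := by
  intro μ ν h
  have hb := hs_sq ν
  have hbν : 0 ≤ Real.sqrt (ν ^ 2 + 4) + ν := by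
    have := hs_gt ν
    have := neg_abs_le ν
    linarith
  have key : Real.sqrt (μ ^ 2 + 4) ≤ (ν - μ) + Real.sqrt (ν ^ 2 + 4) := by
    have hsq : μ ^ 2 + 4 ≤ ((ν - μ) + Real.sqrt (ν ^ 2 + 4)) ^ 2 := by
      nlinarith [mul_nonneg (sub_nonneg.2 h) hbν, sq_nonneg (ν - μ)]
    have h0 : 0 ≤ (ν - μ) + Real.sqrt (ν ^ 2 + 4) := by
      have := Real.sqrt_nonneg (ν ^ 2 + 4); linarith
    calc Real.sqrt (μ ^ 2 + 4) ≤ Real.sqrt (((ν - μ) + Real.sqrt (ν ^ 2 + 4)) ^ 2) :=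
          Real.sqrt_le_sqrt hsq
      _ = (ν - μ) + Real.sqrt (ν ^ 2 + 4) := Real.sqrt_sq h0
  unfold fA
  linarith

lemma fA_cont : Continuous fA := by
  unfold fA
  have h1 : Continuous fun μ : ℝ => μ ^ 2 + 4 := by continuity
  exact (continuous_id.add (Real.continuous_sqrt.comp h1)).div_const 2

lemma Sset_nonempty : ∀ m : ℕ, (Sset (m + 1)).Nonempty := by
  intro m
  induction m with
  | zero =>
    refine ⟨0, ?_⟩
    have : (0:ℝ) ∈ Sset 1 := by rw [Sset_one]; rfl
    exact this
  | succ n ih =>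
    obtain ⟨μ, hμ⟩ := ih
    refine ⟨fA μ, ?_⟩
    rw [Sset_succ n]
    exact ⟨μ, hμ, fA_root μ⟩

lemma sSup_Sset_succ (m : ℕ) : sSup (Sset (m + 2)) = fA (sSup (Sset (m + 1))) := by
  have hne := Sset_nonempty m
  have hne2 : (Sset (m + 2)).Nonempty := Sset_nonempty (m + 1)
  have hbdd := Sset_bdd (m + 1)
  have hbdd2 := Sset_bdd (m + 2)
  have himg : Sset (m + 2)
      = fA '' Sset (m + 1) ∪ (fun μ => (μ - Real.sqrt (μ ^ 2 + 4)) / 2) '' Sset (m + 1) := by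
    rw [Sset_succ m]
    ext x
    simp only [Set.mem_setOf_eq, Set.mem_union, Set.mem_image]
    constructor
    · rintro ⟨μ, hμ, hx⟩
      rcases (root_iff μ x).1 hx with h | h
      · exact Or.inl ⟨μ, hμ, h.symm⟩
      · exact Or.inr ⟨μ, hμ, h.symm⟩
    · rintro (⟨μ, hμ, rfl⟩ | ⟨μ, hμ, rfl⟩)
      · exact ⟨μ, hμ, (root_iff μ _).2 (Or.inl rfl)⟩
      · exact ⟨μ, hμ, (root_iff μ _).2 (Or.inr rfl)⟩
  apply le_antisymm
  · apply csSup_le hne2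
    intro x hx
    rw [himg] at hx
    rcases hx with ⟨μ, hμ, rfl⟩ | ⟨μ, hμ, rfl⟩
    · exact fA_mono (le_csSup hbdd hμ)
    · exact le_of_lt (lt_trans (gA_neg μ) (fA_pos _))
  · have hmap : fA (sSup (Sset (m + 1))) = sSup (fA '' Sset (m + 1)) :=
      Monotone.map_csSup_of_continuousAt fA_cont.continuousAt fA_mono hne hbdd
    rw [hmap]
    apply csSup_le_csSup hbdd2 (hne.image fA)
    rw [himg]
    exact Set.subset_union_left

end AuxBT

/-- `λ₁(T_1) = 0` and, for every `k ≥ 2`, the largest adjacency eigenvalue of the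
binomial tree satisfies `λ₁(T_k) = (λ₁(T_{k-1}) + √(λ₁(T_{k-1})² + 4)) / 2`. -/
theorem lambda1_binomialTree_recurrence :
    lambda1 (binomialTree 1) = 0 ∧
    ∀ k : ℕ, 2 ≤ k →
      lambda1 (binomialTree k) =
        (lambda1 (binomialTree (k - 1)) +
          Real.sqrt (lambda1 (binomialTree (k - 1)) ^ 2 + 4)) / 2 := by
  constructor
  · rw [lambda1_eq_sSup, Sset_one, csSup_singleton]
  · intro k hk
    obtain ⟨m, rfl⟩ : ∃ m, k = m + 2 := ⟨k - 2, by omega⟩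
    show lambda1 (binomialTree (m + 2)) =
      (lambda1 (binomialTree (m + 1)) + Real.sqrt (lambda1 (binomialTree (m + 1)) ^ 2 + 4)) / 2
    rw [lambda1_eq_sSup, lambda1_eq_sSup]
    exact sSup_Sset_succ m
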